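/- Let F, G : A → B be additive functors between abelian categories with A having enough projectives and F right exact, and let α be a natural transformation F|_Proj → G|_Proj on projectives. For any object X of A, any epimorphism p : P → X with P projective, there exists a unique morphism ᾱ_X : F(X) → G(X) such that ᾱ_X ∘ F(p) = G(p) ∘ α_P; moreover ᾱ_X does not depend on the choice of p. -/

import Mathlib

open CategoryTheory CategoryTheory.Limits

/-- Given additive functors `F, G : A ⥤ B` between abelian categories with
`A` having enough projectives, `F` right exact, and a natural transformation `α` defined on
the full subcategory of projectives, then for any object `X` and any epimorphism
`p : P ⟶ X` with `P` projective there is a unique morphism `ᾱ_X : F X ⟶ G X` with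
`ᾱ_X ∘ F p = G p ∘ α_P`; moreover `ᾱ_X` is independent of the choice of `p`. -/
theorem exists_unique_extension_at_object
    {A B : Type*} [Category A] [Category B] [Abelian A] [Abelian B]
    [EnoughProjectives A]
    (F G : A ⥤ B) [F.Additive] [G.Additive] [PreservesFiniteColimits F]
    (α : ObjectProperty.ι (fun X : A => Projective X) ⋙ F ⟶
         ObjectProperty.ι (fun X : A => Projective X) ⋙ G)
    (X : A) :
    (∀ (P : A) (hP : Projective P) (p : P ⟶ X), Epi p →
        ∃! f : F.obj X ⟶ G.obj X, F.map p ≫ f = α.app ⟨P, hP⟩ ≫ G.map p) ∧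
    (∀ (P Q : A) (hP : Projective P) (hQ : Projective Q)
        (p : P ⟶ X) (q : Q ⟶ X), Epi p → Epi q →
        ∀ f g : F.obj X ⟶ G.obj X,
          F.map p ≫ f = α.app ⟨P, hP⟩ ≫ G.map p →
          F.map q ≫ g = α.app ⟨Q, hQ⟩ ≫ G.map q → f = g) := by
  -- naturality of `α` on morphisms between projectives, restated
  have hnat : ∀ (P Q : A) (hP : Projective P) (hQ : Projective Q) (h : P ⟶ Q),
      F.map h ≫ α.app ⟨Q, hQ⟩ = α.app ⟨P, hP⟩ ≫ G.map h := by
    intro P Q hP hQ h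
    exact α.naturality (X := ⟨P, hP⟩) (Y := ⟨Q, hQ⟩) (ObjectProperty.homMk h)
  constructor
  · intro P hP p hp
    -- cover the kernel of `p` by a projective to present `p` as a cokernel
    set Q := Projective.over (kernel p)
    have hQ : Projective Q := Projective.projective_over _
    set d : Q ⟶ P := Projective.π (kernel p) ≫ kernel.ι p with hd
    have hdp : d ≫ p = 0 := by
      rw [hd, Category.assoc, kernel.condition, comp_zero]
    haveI : Epi (Projective.π (kernel p)) := Projective.π_epi _
    -- `p` is a cokernel of `d`
    have hc : IsColimit (CokernelCofork.ofπ p hdp) := by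
      refine CokernelCofork.IsColimit.ofπ _ _
        (fun {T} s hs => Abelian.epiDesc p s ?_) (fun {T} s hs => ?_) (fun {T} s hs m hm => ?_)
      · have : Projective.π (kernel p) ≫ kernel.ι p ≫ s = 0 := by
          rw [← Category.assoc, ← hd, hs]
        rwa [← cancel_epi (Projective.π (kernel p)), comp_zero]
      · simp
      · rw [← cancel_epi p, hm]
        simp
    -- `F` preserves this cokernel
    have hFc : IsColimit (CokernelCofork.ofπ (F.map p)
        (by rw [← F.map_comp, hdp, F.map_zero] :
          F.map d ≫ F.map p = 0)) := CokernelCofork.mapIsColimit _ hc F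
    haveI hFp : Epi (F.map p) := epi_of_isColimit_cofork hFc
    have key : F.map d ≫ (α.app ⟨P, hP⟩ ≫ G.map p) = 0 := by
      rw [← Category.assoc, hnat Q P hQ hP d, Category.assoc, ← G.map_comp, hdp, G.map_zero,
        comp_zero]
    refine ⟨hFc.desc (CokernelCofork.ofπ _ key), ?_, ?_⟩
    · exact hFc.fac (CokernelCofork.ofπ _ key) WalkingParallelPair.one
    · intro g hg
      rw [← cancel_epi (F.map p), hg]
      exact (hFc.fac (CokernelCofork.ofπ _ key) WalkingParallelPair.one).symm
  · intro P Q hP hQ p q hp hq f g hf hg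
    haveI := hp; haveI := hq
    haveI : Epi (F.map p) := preserves_epi_of_preservesColimit F p
    -- lift `p` through `q` using projectivity of `P`
    obtain ⟨h, hh⟩ : ∃ h : P ⟶ Q, h ≫ q = p := ⟨Projective.factorThru p q, by simp⟩
    rw [← cancel_epi (F.map p), hf, ← hh, F.map_comp, Category.assoc, hg, ← Category.assoc,
      hnat P Q hP hQ h, Category.assoc, ← G.map_comp]
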